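/- arXiv:1902.00923 — 3 statements merged into one kernel-verified Lean document; each statement's English description precedes it below -/
import Mathlib

section
/- Suppose Θ_{k+1} = Θ_k + ε(A_k Θ_k + b_k) with ‖A_k‖ ≤ 1, ‖b_k‖ ≤ b_max, ε > 0 and ετ ≤ 1/4 for an integer τ ≥ 1. Then ‖Θ_τ - Θ_0‖ ≤ 4ετ‖Θ_τ‖ + 4ετ b_max. -/
/-- Reinterpret a plain vector as an element of Euclidean space (2-norm). -/
def toE {d : ℕ} (v : Fin d → ℝ) : EuclideanSpace ℝ (Fin d) := WithLp.toLp 2 v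

theorem stmt_7 (d : ℕ) (Θ b : ℕ → EuclideanSpace ℝ (Fin d))
    (A : ℕ → Matrix (Fin d) (Fin d) ℝ) (ε bmax : ℝ) (τ : ℕ) (hε : 0 < ε) (hbmax : 0 ≤ bmax)
    (hτ : 1 ≤ τ) (hετ : ε * τ ≤ 1 / 4)
    (hA : ∀ k (x : EuclideanSpace ℝ (Fin d)), ‖toE ((A k).mulVec x)‖ ≤ ‖x‖)
    (hb : ∀ k, ‖b k‖ ≤ bmax)
    (hrec : ∀ k, Θ (k + 1) = Θ k + ε • (toE ((A k).mulVec (Θ k)) + b k)) :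
    ‖Θ τ - Θ 0‖ ≤ 4 * ε * τ * ‖Θ τ‖ + 4 * ε * τ * bmax := by
  set M : ℝ := ‖Θ 0‖ + bmax with hM
  have hM0 : 0 ≤ M := add_nonneg (norm_nonneg _) hbmax
  have key : ∀ k, k ≤ τ → ‖Θ k - Θ 0‖ ≤ 2 * ε * k * M := by
    intro k
    induction k with
    | zero => intro _; simp
    | succ k ih =>
      intro hk1
      have hkτ : k ≤ τ := Nat.le_of_succ_le hk1
      have ih' := ih hkτ
      have hkε : ε * k ≤ 1 / 4 := by
        calc ε * k ≤ ε * τ := by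
              have : (k : ℝ) ≤ τ := Nat.cast_le.mpr hkτ
              nlinarith
          _ ≤ 1 / 4 := hετ
      have hΘk : ‖Θ k‖ ≤ ‖Θ 0‖ + 2 * ε * k * M := by
        have := norm_sub_norm_le (Θ k) (Θ 0)
        linarith
      have step : ‖Θ (k + 1) - Θ 0‖ ≤ ‖Θ k - Θ 0‖ + ε * (‖Θ k‖ + bmax) := by
        rw [hrec k]
        have h1 : Θ k + ε • (toE ((A k).mulVec (Θ k)) + b k) - Θ 0
            = (Θ k - Θ 0) + ε • (toE ((A k).mulVec (Θ k)) + b k) := by abel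
        rw [h1]
        calc ‖(Θ k - Θ 0) + ε • (toE ((A k).mulVec (Θ k)) + b k)‖
            ≤ ‖Θ k - Θ 0‖ + ‖ε • (toE ((A k).mulVec (Θ k)) + b k)‖ := norm_add_le _ _
          _ ≤ ‖Θ k - Θ 0‖ + ε * (‖Θ k‖ + bmax) := by
              rw [norm_smul, Real.norm_eq_abs, abs_of_pos hε]
              have h2 : ‖toE ((A k).mulVec (Θ k)) + b k‖ ≤ ‖Θ k‖ + bmax := by
                calc ‖toE ((A k).mulVec (Θ k)) + b k‖
                    ≤ ‖toE ((A k).mulVec (Θ k))‖ + ‖b k‖ := norm_add_le _ _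
                  _ ≤ ‖Θ k‖ + bmax := add_le_add (hA k _) (hb k)
              nlinarith
      have hcast : ((k + 1 : ℕ) : ℝ) = (k : ℝ) + 1 := by push_cast; ring
      rw [hcast]
      nlinarith [mul_le_mul_of_nonneg_right hkε hM0, mul_le_mul_of_nonneg_left hΘk hε.le,
        mul_nonneg hε.le hM0]
  have h := key τ le_rfl
  have h0 : ‖Θ 0‖ ≤ ‖Θ τ‖ + ‖Θ τ - Θ 0‖ := by
    have := norm_sub_norm_le (Θ 0) (Θ τ)
    rw [norm_sub_rev] at this
    linarith
  have hετ0 : 0 ≤ ε * τ := mul_nonneg hε.le (Nat.cast_nonneg τ)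
  nlinarith [norm_nonneg (Θ τ - Θ 0), norm_nonneg (Θ τ)]
end

section
/- Suppose Θ_{k+1} = Θ_k + ε(A_k Θ_k + b_k) with ‖A_k‖ ≤ 1, ‖b_k‖ ≤ b_max, ε > 0 and ετ ≤ 1/4 for an integer τ ≥ 1. Then ‖Θ_τ - Θ_0‖² ≤ 32 ε²τ²‖Θ_τ‖² + 32 ε²τ² b_max². -/
theorem stmt_8 (d : ℕ) (Θ b : ℕ → EuclideanSpace ℝ (Fin d))
    (A : ℕ → Matrix (Fin d) (Fin d) ℝ) (ε bmax : ℝ) (τ : ℕ) (hε : 0 < ε) (hbmax : 0 ≤ bmax)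
    (hτ : 1 ≤ τ) (hετ : ε * τ ≤ 1 / 4)
    (hA : ∀ k (x : EuclideanSpace ℝ (Fin d)), ‖toE ((A k).mulVec x)‖ ≤ ‖x‖)
    (hb : ∀ k, ‖b k‖ ≤ bmax)
    (hrec : ∀ k, Θ (k + 1) = Θ k + ε • (toE ((A k).mulVec (Θ k)) + b k)) :
    ‖Θ τ - Θ 0‖ ^ 2 ≤ 32 * ε ^ 2 * τ ^ 2 * ‖Θ τ‖ ^ 2 + 32 * ε ^ 2 * τ ^ 2 * bmax ^ 2 := by
  set C : ℝ := ‖Θ 0‖ + bmax with hC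
  have hC0 : 0 ≤ C := add_nonneg (norm_nonneg _) hbmax
  -- key induction: for k ≤ τ, ‖Θ k - Θ 0‖ ≤ 2 ε k C
  have key : ∀ k, k ≤ τ → ‖Θ k - Θ 0‖ ≤ 2 * ε * k * C := by
    intro k hk
    induction k with
    | zero => simp
    | succ n ih =>
      have hn : n ≤ τ := Nat.le_of_succ_le hk
      have ihn := ih hn
      have hstep : ‖Θ (n + 1) - Θ 0‖ ≤ ‖Θ n - Θ 0‖ + ε * (‖Θ n‖ + bmax) := by
        have : Θ (n + 1) - Θ 0 = (Θ n - Θ 0) + ε • (toE ((A n).mulVec (Θ n)) + b n) := by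
          rw [hrec n]; abel
        rw [this]
        calc ‖(Θ n - Θ 0) + ε • (toE ((A n).mulVec (Θ n)) + b n)‖
            ≤ ‖Θ n - Θ 0‖ + ‖ε • (toE ((A n).mulVec (Θ n)) + b n)‖ := norm_add_le _ _
          _ = ‖Θ n - Θ 0‖ + |ε| * ‖toE ((A n).mulVec (Θ n)) + b n‖ := by rw [norm_smul]; rfl
          _ ≤ ‖Θ n - Θ 0‖ + ε * (‖Θ n‖ + bmax) := by
              have h1 : ‖toE ((A n).mulVec (Θ n)) + b n‖ ≤ ‖Θ n‖ + bmax :=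
                (norm_add_le _ _).trans (add_le_add (hA n (Θ n)) (hb n))
              rw [abs_of_pos hε]
              exact add_le_add (le_refl _) (mul_le_mul_of_nonneg_left h1 hε.le)
      have hΘn : ‖Θ n‖ ≤ ‖Θ 0‖ + ‖Θ n - Θ 0‖ := by
        have h := norm_add_le (Θ 0) (Θ n - Θ 0)
        rw [show Θ 0 + (Θ n - Θ 0) = Θ n by abel] at h
        exact h
      -- 2 ε n ≤ 1/2 since n < τ
      have hεn : 2 * ε * n ≤ 1 / 2 := by
        have h1 : (n : ℝ) ≤ τ := by exact_mod_cast hn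
        nlinarith [hε.le]
      have hntau : (n : ℝ) + 1 ≤ τ := by exact_mod_cast hk
      have hεC : ε * C = ε * ‖Θ 0‖ + ε * bmax := by rw [hC]; ring
      push_cast
      nlinarith [hεC, mul_nonneg hε.le hC0, hε.le, norm_nonneg (Θ n - Θ 0),
        mul_le_mul_of_nonneg_left ihn hε.le,
        mul_le_mul_of_nonneg_left hΘn hε.le,
        mul_le_mul_of_nonneg_right hεn (mul_nonneg hε.le hC0)]
  have hD := key τ le_rfl
  have hΘ0 : ‖Θ 0‖ ≤ ‖Θ τ‖ + ‖Θ τ - Θ 0‖ := by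
    have h := norm_sub_le (Θ τ) (Θ τ - Θ 0)
    rw [show Θ τ - (Θ τ - Θ 0) = Θ 0 by abel] at h
    exact h
  have hετ2 : 2 * ε * τ ≤ 1 / 2 := by nlinarith
  have hετpos : 0 ≤ ε * τ := mul_nonneg hε.le (Nat.cast_nonneg τ)
  have hmain : ‖Θ τ - Θ 0‖ ≤ 4 * ε * τ * ‖Θ τ‖ + 4 * ε * τ * bmax := by
    nlinarith [norm_nonneg (Θ τ - Θ 0), norm_nonneg (Θ τ)]
  nlinarith [norm_nonneg (Θ τ - Θ 0), norm_nonneg (Θ τ), sq_nonneg (‖Θ τ‖ - bmax),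
    mul_nonneg (mul_nonneg hετpos hετpos) (sq_nonneg (‖Θ τ‖ - bmax))]
end

section
/- Consider the scalar recursion Θ_{k+1} = Θ_k + ε(A(X_k)Θ_k + b(X_k)), where (X_k) are i.i.d. uniform on {-1, 1}, A(-1) = -2, b(-1) = -1, A(1) = b(1) = 1, and ε > 0. If Θ_0 has a stationary distribution (i.e., Θ_1 has the same law as Θ_0) with E[Θ_0²] > 0 and E[Θ_0^{2n}] < ∞ for an integer n with ε(n-1) > 2, then one obtains the contradiction 0 = E[Θ_1^{2n} - Θ_0^{2n}] ≥ (ε(n-1) - 2) ε n E[Θ_0²] > 0; hence the stationary 2n-th moment does not exist when ε(n-1) > 2. -/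
open MeasureTheory

theorem stmt_16 (Ω : Type*) [MeasurableSpace Ω] (μ : Measure Ω) [IsProbabilityMeasure μ]
    (Θ0 Θ1 X : Ω → ℝ) (hΘ0 : Measurable Θ0) (hΘ1 : Measurable Θ1) (hX : Measurable X)
    (ε : ℝ) (hε : 0 < ε) (n : ℕ) (hn : 2 < ε * ((n : ℝ) - 1))
    (A b : ℝ → ℝ)
    (hA : A (-1) = -2 ∧ A 1 = 1) (hb : b (-1) = -1 ∧ b 1 = 1)
    (hXval : ∀ ω, X ω = 1 ∨ X ω = -1)
    (hX1 : μ {ω | X ω = 1} = 1 / 2) (hXm1 : μ {ω | X ω = -1} = 1 / 2)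
    (hindep : ProbabilityTheory.IndepFun X Θ0 μ)
    (hrec : ∀ ω, Θ1 ω = Θ0 ω + ε * (A (X ω) * Θ0 ω + b (X ω)))
    (hstat : Measure.map Θ1 μ = Measure.map Θ0 μ)
    (hmom : Integrable (fun ω => (Θ0 ω) ^ (2 * n)) μ)
    (hvar : 0 < ∫ ω, (Θ0 ω) ^ 2 ∂μ) :
    False := by
  obtain ⟨hAm, hAp⟩ := hA
  obtain ⟨hbm, hbp⟩ := hb
  have hn2 : (2:ℝ) < ε * n := by nlinarith
  have hnn : n ≠ 0 := by
    rintro rfl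
    norm_num at hn2
  have heven : Even (2*n) := ⟨n, two_mul n⟩
  -- Bernoulli: (1+ε)^(2n) > 2
  have hpow : (2:ℝ) < (1+ε)^(2*n) := by
    have hber := one_add_mul_le_pow (by linarith : (-2:ℝ) ≤ ε) (2*n)
    have hcast : ((2*n : ℕ) : ℝ) = 2 * (n:ℝ) := by push_cast; ring
    rw [hcast] at hber
    nlinarith
  -- the test function
  set f : ℝ → ℝ := fun t => (t+1)^(2*n) with hf
  have hfc : Continuous f := by fun_prop
  -- pointwise bound for integrability
  have hptw : ∀ x : ℝ, (x+1)^(2*n) ≤ 2^(2*n-1) * (x^(2*n) + 1) := by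
    intro x
    have h1 : (x+1)^(2*n) ≤ (|x|+1)^(2*n) := by
      rw [← heven.pow_abs (x+1)]
      exact pow_le_pow_left₀ (abs_nonneg _) (by simpa using abs_add_le x 1) _
    have h2 := add_pow_le (abs_nonneg x) (by norm_num : (0:ℝ) ≤ 1) (2*n)
    have h3 : |x|^(2*n) = x^(2*n) := heven.pow_abs x
    simp only [one_pow] at h2
    rw [h3] at h2
    linarith
  have I0 : Integrable (fun ω => (Θ0 ω + 1)^(2*n)) μ := by
    refine Integrable.mono ((hmom.add (integrable_const 1)).const_mul (2^(2*n-1))) ?_ ?_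
    · exact ((hΘ0.add measurable_const).pow_const _).aestronglyMeasurable
    · refine ae_of_all _ fun ω => ?_
      simp only [Pi.add_apply]
      have hL : (0:ℝ) ≤ (Θ0 ω + 1)^(2*n) := heven.pow_nonneg _
      have hR : (0:ℝ) ≤ 2^(2*n-1) * ((Θ0 ω)^(2*n) + 1) := by
        have := heven.pow_nonneg (Θ0 ω)
        positivity
      rw [Real.norm_eq_abs, Real.norm_eq_abs, abs_of_nonneg hL, abs_of_nonneg hR]
      exact hptw (Θ0 ω)
  have hsm0 : AEStronglyMeasurable f (Measure.map Θ0 μ) := hfc.aestronglyMeasurable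
  have hsm1 : AEStronglyMeasurable f (Measure.map Θ1 μ) := hfc.aestronglyMeasurable
  have I1 : Integrable (fun ω => (Θ1 ω + 1)^(2*n)) μ := by
    have h0 : Integrable f (Measure.map Θ0 μ) :=
      (integrable_map_measure hsm0 hΘ0.aemeasurable).mpr I0
    rw [← hstat] at h0
    exact (integrable_map_measure hsm1 hΘ1.aemeasurable).mp h0
  set M := ∫ ω, (Θ0 ω + 1)^(2*n) ∂μ with hM
  have key_int_eq : ∫ ω, (Θ1 ω + 1)^(2*n) ∂μ = M := by
    have h1 := integral_map hΘ1.aemeasurable hsm1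
    have h2 := integral_map hΘ0.aemeasurable hsm0
    rw [hstat] at h1
    exact h1.symm.trans h2
  -- independence step
  set s1 : Set Ω := {ω | X ω = 1} with hs1def
  have hs1 : MeasurableSet s1 := hX (measurableSet_singleton 1)
  set g1 : ℝ → ℝ := ({1} : Set ℝ).indicator (fun _ => 1) with hg1
  have hg1m : Measurable g1 := measurable_const.indicator (measurableSet_singleton 1)
  have hcomp : ProbabilityTheory.IndepFun (g1 ∘ X) (f ∘ Θ0) μ :=
    hindep.comp hg1m hfc.measurable
  have hmul := hcomp.integral_fun_mul_eq_mul_integral ((hg1m.comp hX).aestronglyMeasurable)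
    ((hfc.measurable.comp hΘ0).aestronglyMeasurable)
  have hgXeq : (g1 ∘ X) = s1.indicator (fun _ => (1:ℝ)) := by
    funext ω
    by_cases h : X ω = 1 <;>
      simp [hg1, hs1def, Set.indicator_apply, Function.comp, h]
  have hgXint : ∫ ω, (g1 ∘ X) ω ∂μ = 1/2 := by
    rw [hgXeq, integral_indicator_const (1:ℝ) hs1, measureReal_def, hX1]
    simp [ENNReal.toReal_div]
  have hle1 : ∀ ω, (1+ε)^(2*n) * (g1 (X ω) * f (Θ0 ω)) ≤ (Θ1 ω + 1)^(2*n) := by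
    intro ω
    rcases hXval ω with h | h
    · have hθ : Θ1 ω + 1 = (1+ε)*(Θ0 ω + 1) := by
        rw [hrec ω, h, hAp, hbp]; ring
      have hg : g1 (X ω) = 1 := by simp [hg1, h]
      rw [hθ, mul_pow, hg, one_mul, hf]
    · have hg : g1 (X ω) = 0 := by
        rw [hg1, h]
        simp only [Set.indicator_apply, Set.mem_singleton_iff]
        norm_num
      rw [hg, zero_mul, mul_zero]
      exact heven.pow_nonneg _
  have hIprod : Integrable (fun ω => g1 (X ω) * f (Θ0 ω)) μ := by
    refine I0.bdd_mul (c := 1) ((hg1m.comp hX).aestronglyMeasurable) (ae_of_all _ fun ω => ?_)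
    rw [hg1]
    simp only [Set.indicator_apply]
    split <;> simp
  have step : (1+ε)^(2*n) * ((1/2) * M) ≤ M := by
    have hint := integral_mono (hIprod.const_mul ((1+ε)^(2*n))) I1 hle1
    rw [integral_const_mul] at hint
    have : (∫ ω, g1 (X ω) * f (Θ0 ω) ∂μ) = (1/2) * M := by
      rw [show (fun ω => g1 (X ω) * f (Θ0 ω)) = fun ω => (g1 ∘ X) ω * (f ∘ Θ0) ω from rfl]
      rw [hmul, hgXint]
      rfl
    rw [this, key_int_eq] at hint
    exact hint
  have hM0 : 0 ≤ M := integral_nonneg fun ω => heven.pow_nonneg _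
  have hMz : M = 0 := by nlinarith
  have hae : (fun ω => (Θ0 ω + 1)^(2*n)) =ᵐ[μ] 0 :=
    (integral_eq_zero_iff_of_nonneg (fun ω => heven.pow_nonneg _) I0).mp hMz
  have hae0 : ∀ᵐ ω ∂μ, Θ0 ω = -1 := by
    filter_upwards [hae] with ω hω
    have h0 : (Θ0 ω + 1)^(2*n) = 0 := hω
    have := pow_eq_zero_iff (by omega : 2*n ≠ 0) |>.mp h0
    linarith
  -- final contradiction
  set s2 : Set Ω := {ω | X ω = -1} with hs2def
  have hs2 : MeasurableSet s2 := hX (measurableSet_singleton (-1))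
  have hG : Integrable (s2.indicator fun _ => ε^(2*n)) μ :=
    (integrable_const _).indicator hs2
  have hle2 : ∀ᵐ ω ∂μ, s2.indicator (fun _ => ε^(2*n)) ω ≤ (Θ1 ω + 1)^(2*n) := by
    filter_upwards [hae0] with ω hω
    rcases hXval ω with h | h
    · have hni : ω ∉ s2 := by
        rw [hs2def]
        simp only [Set.mem_setOf_eq, h]
        norm_num
      rw [Set.indicator_of_notMem hni]
      exact heven.pow_nonneg _
    · have h1 : Θ1 ω + 1 = ε := by rw [hrec ω, h, hAm, hbm, hω]; ring
      have hmem : ω ∈ s2 := h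
      rw [h1, Set.indicator_of_mem hmem]
  have hfin := integral_mono_ae hG I1 hle2
  rw [key_int_eq, hMz, integral_indicator_const (ε^(2*n)) hs2, measureReal_def, hXm1] at hfin
  have hεp : 0 < ε^(2*n) := pow_pos hε _
  rw [smul_eq_mul] at hfin
  have h12 : ((1:ENNReal)/2).toReal = (1:ℝ)/2 := by simp [ENNReal.toReal_div]
  rw [h12] at hfin
  nlinarith
end
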